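/- Let M be a matroid on E, K ⊆ E, and i ≠ j elements of E \ K. Then i ⊥̸ j | K if and only if there exists a circuit C of M with {i,j} ⊆ C ⊆ {i,j} ∪ K, and every circuit of M contained in {i,j} ∪ K contains either both i and j or neither of them. -/

import Mathlib

open Finset

/-- A matroid on a finite ground set `E`, given by its rank function. -/
structure FinMatroid (α : Type*) [DecidableEq α] where
  E : Finset α
  r : Finset α → ℕ
  r_empty : r ∅ = 0
  r_le_card : ∀ ⦃A⦄, A ⊆ E → r A ≤ A.card
  r_mono : ∀ ⦃A B : Finset α⦄, A ⊆ B → B ⊆ E → r A ≤ r B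
  r_submod : ∀ ⦃A B : Finset α⦄, A ⊆ E → B ⊆ E → r (A ∪ B) + r (A ∩ B) ≤ r A + r B

namespace FinMatroid

variable {α : Type*} [DecidableEq α]

/-- A set is independent if it is subcardinal-tight for the rank function. -/
def Indep (M : FinMatroid α) (S : Finset α) : Prop := S ⊆ M.E ∧ M.r S = S.card

/-- A circuit is a minimal dependent set. -/
def Circuit (M : FinMatroid α) (C : Finset α) : Prop :=
  C ⊆ M.E ∧ M.r C < C.card ∧ ∀ S, S ⊂ C → M.r S = S.card

/-- `B` is a basis of `S` if it is a maximal independent subset of `S`. -/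
def BasisOf (M : FinMatroid α) (B S : Finset α) : Prop :=
  B ⊆ S ∧ M.Indep B ∧ ∀ x ∈ S, x ∉ B → ¬ M.Indep (insert x B)

/-- The conditional independence statement `(ij|K)` holds in `M`:
`r(iK) + r(jK) = r(ijK) + r(K)`. -/
def CI (M : FinMatroid α) (i j : α) (K : Finset α) : Prop :=
  M.r (insert i K) + M.r (insert j K) = M.r (insert i (insert j K)) + M.r K

/-- A matroid is loopless if every singleton of the ground set is independent. -/
def Loopless (M : FinMatroid α) : Prop := ∀ e ∈ M.E, M.r {e} = 1

end FinMatroid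

/-- Well-formedness of a CI-statement `(ij|K)` on ground set `E`. -/
def wfCI {α : Type*} [DecidableEq α] (E : Finset α) (i j : α) (K : Finset α) : Prop :=
  i ∈ E ∧ j ∈ E ∧ i ≠ j ∧ i ∉ K ∧ j ∉ K ∧ K ⊆ E

/-- The CI-structure `[[M]]` of a matroid, as a predicate on CI-statements. -/
def FinMatroid.ciOf {α : Type*} [DecidableEq α] (M : FinMatroid α) :
    α → α → Finset α → Prop :=
  fun i j K => wfCI M.E i j K ∧ M.CI i j K

section Aux

variable {α : Type*} [DecidableEq α] (M : FinMatroid α)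

lemma aux_r_insert_le {x : α} {S : Finset α} (hx : x ∈ M.E) (hS : S ⊆ M.E) :
    M.r (insert x S) ≤ M.r S + 1 := by
  by_cases hxS : x ∈ S
  · simp [Finset.insert_eq_self.mpr hxS]
  · have h := M.r_submod (A := {x}) (B := S) (by simpa using hx) hS
    have h1 : ({x} : Finset α) ∩ S = ∅ := by
      exact Finset.singleton_inter_of_notMem hxS
    have h2 : M.r {x} ≤ 1 := by
      simpa using M.r_le_card (A := {x}) (by simpa using hx)
    rw [h1, M.r_empty] at h
    have : ({x} : Finset α) ∪ S = insert x S := (Finset.insert_eq x S).symm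
    rw [this] at h
    omega

lemma aux_r_le_insert {x : α} {S : Finset α} (hS : insert x S ⊆ M.E) :
    M.r S ≤ M.r (insert x S) :=
  M.r_mono (Finset.subset_insert x S) hS

lemma aux_r_insert_eq_of {x : α} {A B : Finset α} (hAB : A ⊆ B) (hB : B ⊆ M.E)
    (hx : x ∈ M.E) (h : M.r (insert x A) = M.r A) :
    M.r (insert x B) = M.r B := by
  have hsub := M.r_submod (A := insert x A) (B := B)
    (Finset.insert_subset hx (hAB.trans hB)) hB
  have hu : insert x A ∪ B = insert x B := by
    rw [Finset.insert_union, Finset.union_eq_right.mpr hAB]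
  have hi : A ⊆ (insert x A) ∩ B :=
    Finset.subset_inter (Finset.subset_insert x A) hAB
  have hmono : M.r A ≤ M.r ((insert x A) ∩ B) :=
    M.r_mono hi ((Finset.inter_subset_right).trans hB)
  rw [hu, h] at hsub
  have hge : M.r B ≤ M.r (insert x B) :=
    M.r_mono (Finset.subset_insert x B) (Finset.insert_subset hx hB)
  omega

lemma aux_r_union_eq {A : Finset α} (hA : A ⊆ M.E) :
    ∀ D : Finset α, D ⊆ M.E → (∀ y ∈ D, M.r (insert y A) = M.r A) →
      M.r (A ∪ D) = M.r A := by
  intro D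
  induction D using Finset.induction_on with
  | empty => simp
  | @insert y D hyD ih =>
      intro hDE hall
      have hyE : y ∈ M.E := hDE (Finset.mem_insert_self y D)
      have hDE' : D ⊆ M.E := (Finset.subset_insert y D).trans hDE
      have hAD : M.r (A ∪ D) = M.r A :=
        ih hDE' (fun z hz => hall z (Finset.mem_insert_of_mem hz))
      have hins : M.r (insert y (A ∪ D)) = M.r (A ∪ D) :=
        aux_r_insert_eq_of M (A := A) (B := A ∪ D)
          Finset.subset_union_left (Finset.union_subset hA hDE') hyE
          (hall y (Finset.mem_insert_self y D))
      have : A ∪ insert y D = insert y (A ∪ D) := by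
        rw [Finset.union_insert]
      rw [this, hins, hAD]

lemma aux_indep_subset {S T : Finset α} (hST : S ⊆ T) (hT : T ⊆ M.E)
    (hTi : M.r T = T.card) : M.r S = S.card := by
  have hsub := M.r_submod (A := S) (B := T \ S) (hST.trans hT)
    ((Finset.sdiff_subset).trans hT)
  have hu : S ∪ (T \ S) = T := Finset.union_sdiff_of_subset hST
  have hi : S ∩ (T \ S) = ∅ := by
    ext a; simp (config := {contextual := true}) [Finset.mem_sdiff]
  rw [hu, hi, M.r_empty] at hsub
  have h1 : M.r (T \ S) ≤ (T \ S).card := M.r_le_card ((Finset.sdiff_subset).trans hT)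
  have h2 : (T \ S).card = T.card - S.card := Finset.card_sdiff_of_subset hST
  have h3 : S.card ≤ T.card := Finset.card_le_card hST
  have h4 : M.r S ≤ S.card := M.r_le_card (hST.trans hT)
  omega

lemma aux_exists_basis {S : Finset α} (hS : S ⊆ M.E) :
    ∃ B ⊆ S, M.r B = B.card ∧ M.r B = M.r S := by
  classical
  set 𝒮 := S.powerset.filter (fun B => M.r B = B.card) with h𝒮
  have hne : 𝒮.Nonempty := ⟨∅, by simp [h𝒮, M.r_empty]⟩
  obtain ⟨B, hB, hBmax⟩ := Finset.exists_max_image 𝒮 Finset.card hne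
  simp only [h𝒮, Finset.mem_filter, Finset.mem_powerset] at hB
  obtain ⟨hBS, hBi⟩ := hB
  refine ⟨B, hBS, hBi, ?_⟩
  have hall : ∀ y ∈ S, M.r (insert y B) = M.r B := by
    intro y hy
    by_cases hyB : y ∈ B
    · rw [Finset.insert_eq_self.mpr hyB]
    · have hsub : insert y B ⊆ S := Finset.insert_subset hy hBS
      have hle : M.r (insert y B) ≤ (insert y B).card :=
        M.r_le_card (hsub.trans hS)
      have hge : M.r B ≤ M.r (insert y B) :=
        M.r_mono (Finset.subset_insert y B) (hsub.trans hS)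
      have hcard : (insert y B).card = B.card + 1 := Finset.card_insert_of_notMem hyB
      rcases Nat.lt_or_ge (M.r (insert y B)) ((insert y B).card) with hlt | hge2
      · -- dependent : r ≤ card - 1 = card B; combined with ≥ r B = card B
        omega
      · -- independent: contradicts maximality
        have hmem : insert y B ∈ 𝒮 := by
          simp only [h𝒮, Finset.mem_filter, Finset.mem_powerset]
          exact ⟨hsub, le_antisymm hle hge2⟩
        have := hBmax _ hmem
        omega
  have := aux_r_union_eq M (hBS.trans hS) S hS hall
  rw [Finset.union_eq_right.mpr hBS] at this
  exact this.symm

lemma aux_exists_circuit {x : α} {S : Finset α} (hx : x ∈ M.E) (hxS : x ∉ S)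
    (hS : S ⊆ M.E) (hdep : M.r (insert x S) = M.r S) :
    ∃ C, M.Circuit C ∧ x ∈ C ∧ C ⊆ insert x S := by
  classical
  obtain ⟨B, hBS, hBi, hBr⟩ := aux_exists_basis M hS
  have hBE : B ⊆ M.E := hBS.trans hS
  have hxBE : insert x B ⊆ M.E := Finset.insert_subset hx hBE
  have hdepB : M.r (insert x B) < (insert x B).card := by
    have hle : M.r (insert x B) ≤ M.r (insert x S) :=
      M.r_mono (Finset.insert_subset_insert x hBS) (Finset.insert_subset hx hS)
    have hxB : x ∉ B := fun h => hxS (hBS h)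
    have hcard : (insert x B).card = B.card + 1 := Finset.card_insert_of_notMem hxB
    rw [hdep, ← hBr] at hle
    omega
  -- minimal dependent subset of insert x B
  set 𝒟 := (insert x B).powerset.filter (fun D => M.r D < D.card) with h𝒟
  have hne : 𝒟.Nonempty := ⟨insert x B, by simp [h𝒟, hdepB]⟩
  obtain ⟨C, hC, hCmin⟩ := Finset.exists_min_image 𝒟 Finset.card hne
  simp only [h𝒟, Finset.mem_filter, Finset.mem_powerset] at hC
  obtain ⟨hCsub, hCdep⟩ := hC
  have hCE : C ⊆ M.E := hCsub.trans hxBE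
  have hcirc : M.Circuit C := by
    refine ⟨hCE, hCdep, ?_⟩
    intro T hT
    by_contra hTd
    have hTle : M.r T ≤ T.card := M.r_le_card ((hT.subset).trans hCE)
    have hTdep : M.r T < T.card := lt_of_le_of_ne hTle hTd
    have hTmem : T ∈ 𝒟 := by
      simp only [h𝒟, Finset.mem_filter, Finset.mem_powerset]
      exact ⟨(hT.subset).trans hCsub, hTdep⟩
    have := hCmin _ hTmem
    have := Finset.card_lt_card hT
    omega
  have hxC : x ∈ C := by
    by_contra hxC
    have hCB : C ⊆ B := by
      intro a ha
      rcases Finset.mem_insert.mp (hCsub ha) with h | h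
      · exact absurd (h ▸ ha) hxC
      · exact h
    have := aux_indep_subset M hCB hBE hBi
    omega
  exact ⟨C, hcirc, hxC, hCsub.trans (Finset.insert_subset_insert x hBS)⟩

lemma aux_circuit_r {C : Finset α} (hC : M.Circuit C) (hne : C.Nonempty) :
    M.r C = C.card - 1 := by
  obtain ⟨hCE, hdep, hmin⟩ := hC
  obtain ⟨a, ha⟩ := hne
  have herase : M.r (C.erase a) = (C.erase a).card :=
    hmin _ (Finset.erase_ssubset ha)
  have hcard : (C.erase a).card = C.card - 1 := Finset.card_erase_of_mem ha
  have hge : M.r (C.erase a) ≤ M.r C := M.r_mono (Finset.erase_subset a C) hCE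
  omega

lemma aux_dep_of_circuit {x : α} {S C : Finset α} (hC : M.Circuit C) (hxC : x ∈ C)
    (hCS : C ⊆ insert x S) (hx : x ∈ M.E) (hxS : x ∉ S) (hS : S ⊆ M.E) :
    M.r (insert x S) = M.r S := by
  have hrC := aux_circuit_r M hC ⟨x, hxC⟩
  have herase : M.r (C.erase x) = (C.erase x).card :=
    hC.2.2 _ (Finset.erase_ssubset hxC)
  have hcard : (C.erase x).card = C.card - 1 := Finset.card_erase_of_mem hxC
  have hins : insert x (C.erase x) = C := Finset.insert_erase hxC
  have hbase : M.r (insert x (C.erase x)) = M.r (C.erase x) := by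
    rw [hins, hrC, herase, hcard]
  have hsub : C.erase x ⊆ S := by
    intro a ha
    have haC := Finset.mem_erase.mp ha
    rcases Finset.mem_insert.mp (hCS haC.2) with h | h
    · exact absurd h haC.1
    · exact h
  exact aux_r_insert_eq_of M hsub hS hx hbase

end Aux

/-- `i ⊥̸ j | K` iff there is a circuit `C` with
`{i,j} ⊆ C ⊆ {i,j} ∪ K`, and every circuit contained in `{i,j} ∪ K`
contains both of `i, j` or neither of them. -/
theorem not_CI_iff_circuits {α : Type*} [DecidableEq α] (M : FinMatroid α)
    (i j : α) (K : Finset α)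
    (hK : K ⊆ M.E) (hi : i ∈ M.E) (hj : j ∈ M.E) (hij : i ≠ j)
    (hiK : i ∉ K) (hjK : j ∉ K) :
    (¬ M.CI i j K) ↔
      ((∃ C, M.Circuit C ∧ i ∈ C ∧ j ∈ C ∧ C ⊆ insert i (insert j K)) ∧
        (∀ C, M.Circuit C → C ⊆ insert i (insert j K) →
          (i ∈ C ∧ j ∈ C) ∨ (i ∉ C ∧ j ∉ C))) := by
  classical
  set rk := M.r K with hrk
  set ri := M.r (insert i K) with hri
  set rj := M.r (insert j K) with hrj
  set rij := M.r (insert i (insert j K)) with hrij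
  have hiKE : insert i K ⊆ M.E := Finset.insert_subset hi hK
  have hjKE : insert j K ⊆ M.E := Finset.insert_subset hj hK
  have hijKE : insert i (insert j K) ⊆ M.E := Finset.insert_subset hi hjKE
  -- basic inequalities
  have h_submod : rij + rk ≤ ri + rj := by
    have h := M.r_submod hiKE hjKE
    have hu : insert i K ∪ insert j K = insert i (insert j K) := by
      ext a; simp [Finset.mem_insert]; tauto
    have hint : insert i K ∩ insert j K = K := by
      ext a
      simp only [Finset.mem_inter, Finset.mem_insert]
      constructor
      · rintro ⟨h1 | h1, h2 | h2⟩
        · exact absurd (h1.symm.trans h2) hij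
        · exact absurd (h1 ▸ h2) hiK
        · exact h1
        · exact h1
      · intro h; exact ⟨Or.inr h, Or.inr h⟩
    rw [hu, hint] at h
    exact h
  have h_ri_le : ri ≤ rk + 1 := aux_r_insert_le M hi hK
  have h_rj_le : rj ≤ rk + 1 := aux_r_insert_le M hj hK
  have h_rk_ri : rk ≤ ri := aux_r_le_insert M hiKE
  have h_rk_rj : rk ≤ rj := aux_r_le_insert M hjKE
  have h_ri_rij : ri ≤ rij := by
    have : insert i K ⊆ insert i (insert j K) :=
      Finset.insert_subset_insert i (Finset.subset_insert j K)
    exact M.r_mono this hijKE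
  have h_rj_rij : rj ≤ rij := by
    have : insert j K ⊆ insert i (insert j K) := Finset.subset_insert i _
    exact M.r_mono this hijKE
  have hcomm : insert i (insert j K) = insert j (insert i K) := Finset.insert_comm i j K
  have hjiK : j ∉ insert i K := by
    simp only [Finset.mem_insert]; push_neg; exact ⟨fun h => hij h.symm, hjK⟩
  have hijK' : i ∉ insert j K := by
    simp only [Finset.mem_insert]; push_neg; exact ⟨hij, hiK⟩
  have key : (¬ M.CI i j K) ↔ (ri = rk + 1 ∧ rj = rk + 1 ∧ rij = rk + 1) := by
    unfold FinMatroid.CI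
    rw [← hri, ← hrj, ← hrij, ← hrk]
    omega
  rw [key]
  constructor
  · rintro ⟨hri1, hrj1, hrij1⟩
    have hdep : M.r (insert j (insert i K)) = M.r (insert i K) := by
      rw [← hcomm, ← hrij, ← hri, hrij1, hri1]
    obtain ⟨C, hC, hjC, hCsub⟩ :=
      aux_exists_circuit M hj hjiK hiKE hdep
    rw [← hcomm] at hCsub
    have hiC : i ∈ C := by
      by_contra hiC
      have hCjK : C ⊆ insert j K := by
        intro a ha
        have := hCsub ha
        rw [hcomm] at this
        rcases Finset.mem_insert.mp this with h | h
        · exact Finset.mem_insert.mpr (Or.inl h)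
        · rcases Finset.mem_insert.mp h with h' | h'
          · exact absurd (h' ▸ ha) hiC
          · exact Finset.mem_insert.mpr (Or.inr h')
      have := aux_dep_of_circuit M hC hjC hCjK hj hjK hK
      rw [← hrj, ← hrk] at this
      omega
    refine ⟨⟨C, hC, hiC, hjC, hCsub⟩, ?_⟩
    intro D hD hDsub
    by_cases hiD : i ∈ D <;> by_cases hjD : j ∈ D
    · exact Or.inl ⟨hiD, hjD⟩
    · exfalso
      have hDiK : D ⊆ insert i K := by
        intro a ha
        rcases Finset.mem_insert.mp (hDsub ha) with h | h
        · exact Finset.mem_insert.mpr (Or.inl h)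
        · rcases Finset.mem_insert.mp h with h' | h'
          · exact absurd (h' ▸ ha) hjD
          · exact Finset.mem_insert.mpr (Or.inr h')
      have := aux_dep_of_circuit M hD hiD hDiK hi hiK hK
      rw [← hri, ← hrk] at this
      omega
    · exfalso
      have hDjK : D ⊆ insert j K := by
        intro a ha
        rcases Finset.mem_insert.mp (hDsub ha) with h | h
        · exact absurd (h ▸ ha) hiD
        · exact h
      have := aux_dep_of_circuit M hD hjD hDjK hj hjK hK
      rw [← hrj, ← hrk] at this
      omega
    · exact Or.inr ⟨hiD, hjD⟩
  · rintro ⟨⟨C, hC, hiC, hjC, hCsub⟩, hall⟩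
    have hri1 : ri = rk + 1 := by
      by_contra hne
      have hri0 : ri = rk := by omega
      obtain ⟨D, hD, hiD, hDsub⟩ :=
        aux_exists_circuit M hi hiK hK (by rw [← hri, ← hrk]; omega)
      have hDsub' : D ⊆ insert i (insert j K) :=
        hDsub.trans (Finset.insert_subset_insert i (Finset.subset_insert j K))
      have hjD : j ∉ D := fun h => hjiK (hDsub h)
      rcases hall D hD hDsub' with ⟨_, h2⟩ | ⟨h1, _⟩
      · exact hjD h2
      · exact h1 hiD
    have hrj1 : rj = rk + 1 := by
      by_contra hne
      obtain ⟨D, hD, hjD, hDsub⟩ :=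
        aux_exists_circuit M hj hjK hK (by rw [← hrj, ← hrk]; omega)
      have hDsub' : D ⊆ insert i (insert j K) :=
        hDsub.trans (Finset.subset_insert i _)
      have hiD : i ∉ D := fun h => hijK' (hDsub h)
      rcases hall D hD hDsub' with ⟨h1, _⟩ | ⟨_, h2⟩
      · exact hiD h1
      · exact h2 hjD
    have hrij1 : rij = rk + 1 := by
      have hdep : M.r (insert j (insert i K)) = M.r (insert i K) := by
        apply aux_dep_of_circuit M hC hjC _ hj hjiK hiKE
        rw [← hcomm]; exact hCsub
      rw [← hcomm, ← hrij, ← hri] at hdep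
      omega
    exact ⟨hri1, hrj1, hrij1⟩
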